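/- Let Y and Z be independent random variables taking finitely many values, and let E = E(Y,Z) be an event depending on Y and Z. Let Y′, Z′ be independent copies of Y, Z respectively (all four independent). Then P[E(Y,Z)]^4 ≤ P[E(Y,Z) ∩ E(Y′,Z) ∩ E(Y,Z′) ∩ E(Y′,Z′)]. -/

import Mathlib

open MeasureTheory ENNReal

lemma jensen_sq {γ : Type*} [MeasurableSpace γ] (μ : Measure γ) [IsProbabilityMeasure μ]
    {g : γ → ℝ≥0∞} (hg : AEMeasurable g μ) :
    (∫⁻ x, g x ∂μ) ^ 2 ≤ ∫⁻ x, (g x) ^ 2 ∂μ := by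
  have hpq : Real.HolderConjugate 2 2 := by constructor <;> norm_num
  have h := ENNReal.lintegral_mul_le_Lp_mul_Lq μ hpq hg
    (aemeasurable_const (b := (1 : ℝ≥0∞)))
  simp only [Pi.mul_apply, mul_one, ENNReal.one_rpow, lintegral_one, measure_univ,
    ENNReal.one_rpow, one_rpow, mul_one] at h
  have h2 : ∀ x, g x ^ (2:ℝ) = g x ^ 2 := fun x => by
    rw [← ENNReal.rpow_natCast (g x) 2]; norm_num
  calc (∫⁻ x, g x ∂μ) ^ 2 ≤ ((∫⁻ x, g x ^ (2:ℝ) ∂μ) ^ (1/(2:ℝ))) ^ 2 := pow_le_pow_left' h 2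
    _ = ∫⁻ x, (g x) ^ 2 ∂μ := by
        rw [← ENNReal.rpow_natCast (((∫⁻ x, g x ^ (2:ℝ) ∂μ) ^ (1/(2:ℝ)))) 2,
          ← ENNReal.rpow_mul]
        norm_num [h2]

theorem stmt_3 {α β : Type*} [Fintype α] [Fintype β]
    [MeasurableSpace α] [MeasurableSpace β]
    (μY : Measure α) (μZ : Measure β)
    [IsProbabilityMeasure μY] [IsProbabilityMeasure μZ]
    (E : Set (α × β)) (hE : MeasurableSet E) :
    ((μY.prod μZ) E) ^ 4 ≤
      (μY.prod (μZ.prod (μY.prod μZ)))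
        {ω : α × β × α × β |
          (ω.1, ω.2.1) ∈ E ∧ (ω.2.2.1, ω.2.1) ∈ E ∧
          (ω.1, ω.2.2.2) ∈ E ∧ (ω.2.2.1, ω.2.2.2) ∈ E} := by
  set ind : α × β → ℝ≥0∞ := E.indicator 1 with hind_def
  have hind : Measurable ind := measurable_one.indicator hE
  set f : α → β → ℝ≥0∞ := fun y z => ind (y, z) with hf_def
  have hfy : ∀ y, Measurable (f y) := fun y => hind.comp measurable_prodMk_left
  -- measurability of sections
  have hfsec : ∀ y' : α, Measurable fun z => f y' z := hfy
  have hfz : ∀ z : β, Measurable fun y => f y z := fun z =>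
    hind.comp (measurable_id.prodMk measurable_const)
  -- g z = ∫⁻ y, f y z
  set g : β → ℝ≥0∞ := fun z => ∫⁻ y, f y z ∂μY with hg_def
  have hg : Measurable g :=
    (hind.comp (measurable_snd.prodMk measurable_fst)).lintegral_prod_right' (ν := μY)
  -- h y y' = ∫⁻ z, f y z * f y' z
  set h : α → α → ℝ≥0∞ := fun y y' => ∫⁻ z, f y z * f y' z ∂μZ with hh_def
  have hhm : Measurable (fun p : α × α => h p.1 p.2) :=
    (((hind.comp ((measurable_fst.comp measurable_fst).prodMk measurable_snd))).mul
      (hind.comp ((measurable_snd.comp measurable_fst).prodMk measurable_snd))).lintegral_prod_right' (ν := μZ)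
  -- Step A : LHS
  have hA : (μY.prod μZ) E = ∫⁻ z, g z ∂μZ := by
    rw [← lintegral_indicator_one hE]
    rw [lintegral_prod _ hind.aemeasurable]
    exact lintegral_lintegral_swap (f := f) hind.aemeasurable
  -- Step B : RHS
  set S : Set (α × β × α × β) :=
    {ω : α × β × α × β | (ω.1, ω.2.1) ∈ E ∧ (ω.2.2.1, ω.2.1) ∈ E ∧
      (ω.1, ω.2.2.2) ∈ E ∧ (ω.2.2.1, ω.2.2.2) ∈ E} with hS_def
  set F : α × β × α × β → ℝ≥0∞ := fun ω =>
    (f ω.1 ω.2.1 * f ω.2.2.1 ω.2.1) * (f ω.1 ω.2.2.2 * f ω.2.2.1 ω.2.2.2) with hF_def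
  have hFm : Measurable F := by
    have h1 : Measurable fun ω : α × β × α × β => ind (ω.1, ω.2.1) :=
      hind.comp (measurable_fst.prodMk (measurable_fst.comp measurable_snd))
    have h2 : Measurable fun ω : α × β × α × β => ind (ω.2.2.1, ω.2.1) :=
      hind.comp ((measurable_fst.comp (measurable_snd.comp measurable_snd)).prodMk
        (measurable_fst.comp measurable_snd))
    have h3 : Measurable fun ω : α × β × α × β => ind (ω.1, ω.2.2.2) :=
      hind.comp (measurable_fst.prodMk (measurable_snd.comp (measurable_snd.comp measurable_snd)))
    have h4 : Measurable fun ω : α × β × α × β => ind (ω.2.2.1, ω.2.2.2) :=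
      hind.comp ((measurable_fst.comp (measurable_snd.comp measurable_snd)).prodMk
        (measurable_snd.comp (measurable_snd.comp measurable_snd)))
    exact (h1.mul h2).mul (h3.mul h4)
  have hSm : MeasurableSet S := by
    have h1 : Measurable fun ω : α × β × α × β => (ω.1, ω.2.1) :=
      measurable_fst.prodMk (measurable_fst.comp measurable_snd)
    have h2 : Measurable fun ω : α × β × α × β => (ω.2.2.1, ω.2.1) :=
      (measurable_fst.comp (measurable_snd.comp measurable_snd)).prodMk
        (measurable_fst.comp measurable_snd)
    have h3 : Measurable fun ω : α × β × α × β => (ω.1, ω.2.2.2) :=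
      measurable_fst.prodMk (measurable_snd.comp (measurable_snd.comp measurable_snd))
    have h4 : Measurable fun ω : α × β × α × β => (ω.2.2.1, ω.2.2.2) :=
      (measurable_fst.comp (measurable_snd.comp measurable_snd)).prodMk
        (measurable_snd.comp (measurable_snd.comp measurable_snd))
    exact ((h1 hE).inter ((h2 hE).inter ((h3 hE).inter (h4 hE))))
  have hSF : ∀ ω, S.indicator (1 : α × β × α × β → ℝ≥0∞) ω = F ω := by
    intro ω
    simp only [Set.indicator_apply, Set.mem_setOf_eq, hS_def, hF_def, hf_def, hind_def,
      Pi.one_apply]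
    by_cases h1 : (ω.1, ω.2.1) ∈ E <;> by_cases h2 : (ω.2.2.1, ω.2.1) ∈ E <;>
      by_cases h3 : (ω.1, ω.2.2.2) ∈ E <;> by_cases h4 : (ω.2.2.1, ω.2.2.2) ∈ E <;>
      simp [h1, h2, h3, h4, Set.indicator_apply]
  have hB : (μY.prod (μZ.prod (μY.prod μZ))) S
      = ∫⁻ y, ∫⁻ z, ∫⁻ y', ∫⁻ z', (f y z * f y' z) * (f y z' * f y' z') ∂μZ ∂μY ∂μZ ∂μY := by
    rw [← lintegral_indicator_one hSm]
    have : ∫⁻ ω, S.indicator 1 ω ∂(μY.prod (μZ.prod (μY.prod μZ)))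
        = ∫⁻ ω, F ω ∂(μY.prod (μZ.prod (μY.prod μZ))) := lintegral_congr hSF
    rw [this, lintegral_prod _ hFm.aemeasurable]
    refine lintegral_congr fun y => ?_
    rw [lintegral_prod (fun p => F (y, p)) (hFm.comp measurable_prodMk_left).aemeasurable]
    refine lintegral_congr fun z => ?_
    rw [lintegral_prod (fun p => F (y, z, p)) ((hFm.comp measurable_prodMk_left).comp
      measurable_prodMk_left).aemeasurable]
  -- Step C : collapse inner integrals
  have hC : ∀ y, ∫⁻ z, ∫⁻ y', ∫⁻ z', (f y z * f y' z) * (f y z' * f y' z') ∂μZ ∂μY ∂μZ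
      = ∫⁻ y', (h y y') ^ 2 ∂μY := by
    intro y
    have hhy : Measurable fun y' => h y y' :=
      hhm.comp (measurable_const.prodMk measurable_id)
    calc ∫⁻ z, ∫⁻ y', ∫⁻ z', (f y z * f y' z) * (f y z' * f y' z') ∂μZ ∂μY ∂μZ
        = ∫⁻ z, ∫⁻ y', (f y z * f y' z) * h y y' ∂μY ∂μZ := by
          refine lintegral_congr fun z => lintegral_congr fun y' => ?_
          rw [lintegral_const_mul _ (f := fun z => f y z * f y' z) ((hfy y).mul (hfy y'))]
      _ = ∫⁻ y', ∫⁻ z, (f y z * f y' z) * h y y' ∂μZ ∂μY := by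
          refine lintegral_lintegral_swap (f := fun z y' => (f y z * f y' z) * h y y') ?_
          exact (((hind.comp (measurable_const.prodMk measurable_fst)).mul
            (hind.comp (measurable_snd.prodMk measurable_fst))).mul
            (hhy.comp measurable_snd)).aemeasurable
      _ = ∫⁻ y', (h y y') ^ 2 ∂μY := by
          refine lintegral_congr fun y' => ?_
          rw [lintegral_mul_const _ (f := fun z => f y z * f y' z) ((hfy y).mul (hfy y')), sq]
  -- Step D
  have hD : ∫⁻ y, ∫⁻ y', h y y' ∂μY ∂μY = ∫⁻ z, g z ^ 2 ∂μZ := by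
    calc ∫⁻ y, ∫⁻ y', h y y' ∂μY ∂μY
        = ∫⁻ y, ∫⁻ z, ∫⁻ y', f y z * f y' z ∂μY ∂μZ ∂μY := by
          refine lintegral_congr fun y => ?_
          refine (lintegral_lintegral_swap (f := fun y' z => f y z * f y' z) ?_).trans ?_
          · exact ((hind.comp (measurable_const.prodMk measurable_snd)).mul
              (hind.comp (measurable_fst.prodMk measurable_snd))).aemeasurable
          · rfl
      _ = ∫⁻ y, ∫⁻ z, f y z * g z ∂μZ ∂μY := by
          refine lintegral_congr fun y => lintegral_congr fun z => ?_
          rw [lintegral_const_mul _ (hfz z)]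
      _ = ∫⁻ z, ∫⁻ y, f y z * g z ∂μY ∂μZ := by
          refine lintegral_lintegral_swap (f := fun y z => f y z * g z) ?_
          exact (hind.mul (hg.comp measurable_snd)).aemeasurable
      _ = ∫⁻ z, g z ^ 2 ∂μZ := by
          refine lintegral_congr fun z => ?_
          rw [lintegral_mul_const _ (hfz z), sq]
  -- Final chain
  have hH1 : Measurable fun y => ∫⁻ y', h y y' ∂μY := hhm.lintegral_prod_right' (ν := μY)
  calc ((μY.prod μZ) E) ^ 4 = ((∫⁻ z, g z ∂μZ) ^ 2) ^ 2 := by rw [hA]; ring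
    _ ≤ (∫⁻ z, g z ^ 2 ∂μZ) ^ 2 := pow_le_pow_left' (jensen_sq μZ hg.aemeasurable) 2
    _ = (∫⁻ y, ∫⁻ y', h y y' ∂μY ∂μY) ^ 2 := by rw [hD]
    _ ≤ ∫⁻ y, (∫⁻ y', h y y' ∂μY) ^ 2 ∂μY := jensen_sq μY hH1.aemeasurable
    _ ≤ ∫⁻ y, ∫⁻ y', (h y y') ^ 2 ∂μY ∂μY := lintegral_mono fun y =>
        jensen_sq μY (hhm.comp (measurable_const.prodMk measurable_id)).aemeasurable
    _ = (μY.prod (μZ.prod (μY.prod μZ))) S := by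
        rw [hB]; exact (lintegral_congr fun y => (hC y).symm)
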